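/- Let n ≥ 1, let ξ ∈ ℝⁿ with ξ ≠ 0, and let α > −1/2. Then the linear map σ_{α,ξ} maps the subspace of symmetric real n×n matrices to itself and restricts to a linear bijection of that subspace. -/

import Mathlib

open Matrix

/-- The principal symbol (up to overall sign) of the operator `L_{g,γ,α}` from the
modified spatial harmonic gauge: `σ_{α,ξ}(h) = ‖ξ‖²·h + α·(ξ(hξ)ᵀ + (hξ)ξᵀ)`. -/
noncomputable def sigmaSymb {n : ℕ} (α : ℝ) (ξ : Fin n → ℝ)
    (h : Matrix (Fin n) (Fin n) ℝ) : Matrix (Fin n) (Fin n) ℝ :=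
  (ξ ⬝ᵥ ξ) • h + α • (vecMulVec ξ (h.mulVec ξ) + vecMulVec (h.mulVec ξ) ξ)

lemma vecMulVec_mulVec' {n : ℕ} (a b x : Fin n → ℝ) :
    (vecMulVec a b).mulVec x = (b ⬝ᵥ x) • a := by
  ext i
  simp only [mulVec, dotProduct, vecMulVec_apply, Pi.smul_apply, smul_eq_mul, Finset.sum_mul]
  exact Finset.sum_congr rfl fun j _ => by ring

lemma transpose_vecMulVec' {n : ℕ} (a b : Fin n → ℝ) :
    (vecMulVec a b)ᵀ = vecMulVec b a := by
  ext i j; simp [vecMulVec_apply, mul_comm]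

lemma sigmaSymb_mulVec {n : ℕ} (α : ℝ) (ξ : Fin n → ℝ) (h : Matrix (Fin n) (Fin n) ℝ) :
    (sigmaSymb α ξ h).mulVec ξ =
      ((1+α) * (ξ ⬝ᵥ ξ)) • h.mulVec ξ + (α * (h.mulVec ξ ⬝ᵥ ξ)) • ξ := by
  simp [sigmaSymb, add_mulVec, smul_mulVec, vecMulVec_mulVec', smul_smul]
  module

theorem stmt1 (n : ℕ) (hn : 1 ≤ n) (ξ : Fin n → ℝ) (hξ : ξ ≠ 0) (α : ℝ)
    (hα : α > -(1/2)) :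
    IsLinearMap ℝ (sigmaSymb α ξ) ∧
    (∀ h : Matrix (Fin n) (Fin n) ℝ, h.IsSymm → (sigmaSymb α ξ h).IsSymm) ∧
    Set.BijOn (sigmaSymb α ξ) {h | h.IsSymm} {h | h.IsSymm} := by
  set c : ℝ := ξ ⬝ᵥ ξ with hcdef
  have hc : c ≠ 0 := fun hc0 => hξ (dotProduct_self_eq_zero.mp hc0)
  have h1α : (1:ℝ) + α ≠ 0 := by linarith
  have h2α : (1:ℝ) + 2*α ≠ 0 := by linarith
  -- the inverse map
  set w : Matrix (Fin n) (Fin n) ℝ → (Fin n → ℝ) := fun k =>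
    ((1+α) * c)⁻¹ • (k.mulVec ξ - (α * (ξ ⬝ᵥ k.mulVec ξ) / (c * (1+2*α))) • ξ) with hwdef
  set τ : Matrix (Fin n) (Fin n) ℝ → Matrix (Fin n) (Fin n) ℝ := fun k =>
    c⁻¹ • (k - α • (vecMulVec ξ (w k) + vecMulVec (w k) ξ)) with hτdef
  have hwmul : ∀ k : Matrix (Fin n) (Fin n) ℝ, (τ k).mulVec ξ = w k := by
    intro k
    have hq : w k ⬝ᵥ ξ = (ξ ⬝ᵥ k.mulVec ξ) / (c * (1+2*α)) := by
      rw [hwdef]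
      simp only [smul_dotProduct, sub_dotProduct, smul_eq_mul]
      rw [dotProduct_comm (k.mulVec ξ) ξ]
      rw [← hcdef]
      have h2α' : (1:ℝ) + α*2 ≠ 0 := by linarith
      field_simp
      ring
    rw [hτdef]
    simp only [smul_mulVec, sub_mulVec, add_mulVec, vecMulVec_mulVec']
    rw [hq]
    rw [hwdef]
    match_scalars <;> field_simp <;> ring
  have hστ : ∀ k : Matrix (Fin n) (Fin n) ℝ, sigmaSymb α ξ (τ k) = k := by
    intro k
    rw [sigmaSymb, hwmul k, ← hcdef, hτdef]
    rw [smul_smul, mul_inv_cancel₀ hc, one_smul, sub_add_cancel]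
  have hwσ : ∀ h : Matrix (Fin n) (Fin n) ℝ, w (sigmaSymb α ξ h) = h.mulVec ξ := by
    intro h
    rw [hwdef]
    simp only [sigmaSymb_mulVec, ← hcdef]
    simp only [dotProduct_add, dotProduct_smul, smul_eq_mul,
      dotProduct_comm ξ (h.mulVec ξ)]
    rw [← hcdef]
    have h2α' : (1:ℝ) + α*2 ≠ 0 := by linarith
    match_scalars <;> field_simp <;> ring
  have hτσ : ∀ h : Matrix (Fin n) (Fin n) ℝ, τ (sigmaSymb α ξ h) = h := by
    intro h
    rw [hτdef]
    simp only [hwσ]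
    rw [sigmaSymb, ← hcdef, add_sub_cancel_right, smul_smul, inv_mul_cancel₀ hc, one_smul]
  have hsymm : ∀ h : Matrix (Fin n) (Fin n) ℝ, h.IsSymm → (sigmaSymb α ξ h).IsSymm := by
    intro h hh
    show _ᵀ = _
    rw [sigmaSymb]
    rw [transpose_add, transpose_smul, transpose_smul, transpose_add,
      transpose_vecMulVec', transpose_vecMulVec', hh.eq, add_comm (vecMulVec (h.mulVec ξ) ξ)]
  have hτsymm : ∀ k : Matrix (Fin n) (Fin n) ℝ, k.IsSymm → (τ k).IsSymm := by
    intro k hk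
    show _ᵀ = _
    rw [hτdef]
    rw [transpose_smul, transpose_sub, transpose_smul, transpose_add,
      transpose_vecMulVec', transpose_vecMulVec', hk.eq, add_comm (vecMulVec (w k) ξ)]
  refine ⟨⟨?_, ?_⟩, hsymm, ?_, ?_, ?_⟩
  · intro a b
    ext i j
    simp [sigmaSymb, vecMulVec_apply, add_mulVec]
    ring
  · intro r a
    ext i j
    simp [sigmaSymb, vecMulVec_apply, smul_mulVec]
    ring
  · intro h hh; exact hsymm h hh
  · intro a _ b _ hab
    rw [← hτσ a, ← hτσ b, hab]
  · intro k hk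
    exact ⟨τ k, hτsymm k hk, hστ k⟩
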